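/- arXiv:1510.07461 — 3 statements merged into one kernel-verified Lean document; each statement's English description precedes it below -/
import Mathlib

section
/- Let X be a random vector in ℝ^n with PDF f, marginal PDFs f₁,…,f_n, φ(x) = ∏ᵢ φ_i(x_i) with φ_i ≥ 0, and p > 1. If ∫_{ℝ^n} ∏ᵢ φ_i(x_i) f_i(x_i)^{p-1} [f(x) - ∏ᵢ f_i(x_i)] dx ≥ 0, then h^w_{φ,p}(f) ≤ ∑_{i=1}^n h^w_{φ_i,p}(f_i), with equality if the components X₁,…,X_n are independent (f = ∏ f_i a.e.). -/
open MeasureTheory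
open scoped ENNReal

/-- Auxiliary: a measurable function whose `p`-th norm-power is integrable is in `ℒp`. -/
lemma memLp_of_integrable_rpow_aux {α : Type*} [MeasurableSpace α] {μ : Measure α}
    {u : α → ℝ} {p : ℝ} (hp : 0 < p) (hu : AEStronglyMeasurable u μ)
    (h : Integrable (fun x => ‖u x‖ ^ p) μ) : MemLp u (ENNReal.ofReal p) μ := by
  have hq0 : ENNReal.ofReal p ≠ 0 := by simpa [ENNReal.ofReal_eq_zero, not_le] using hp
  have hqt : ENNReal.ofReal p ≠ ⊤ := ENNReal.ofReal_ne_top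
  refine (memLp_norm_rpow_iff (p := ENNReal.ofReal p) hu hq0 hqt).1 ?_
  rw [ENNReal.div_self hq0 hqt, memLp_one_iff_integrable]
  simpa [ENNReal.toReal_ofReal hp.le] using h

/-- Subadditivity of the weighted Rényi entropy over coordinates, p > 1,
with equality when the components are independent (f = ∏ fᵢ a.e.). -/
theorem stmt_5 (n : ℕ) (f : (Fin n → ℝ) → ℝ) (fm : Fin n → ℝ → ℝ)
    (φ : Fin n → ℝ → ℝ) (p : ℝ) (hp : 1 < p)
    (hf0 : ∀ x, 0 ≤ f x) (hfmeas : Measurable f) (hf1 : ∫ x, f x = 1)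
    (hfm0 : ∀ i t, 0 ≤ fm i t) (hfmmeas : ∀ i, Measurable (fm i))
    (hfm1 : ∀ i, ∫ t, fm i t = 1)
    (hmarg : ∀ i (s : Set ℝ), MeasurableSet s →
      (∫ x in {x : Fin n → ℝ | x i ∈ s}, f x) = ∫ t in s, fm i t)
    (hφ0 : ∀ i t, 0 ≤ φ i t) (hφmeas : ∀ i, Measurable (φ i))
    (hIf : Integrable fun x : Fin n → ℝ => (∏ i, φ i (x i)) * f x ^ p)
    (hIfpos : 0 < ∫ x : Fin n → ℝ, (∏ i, φ i (x i)) * f x ^ p)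
    (hIfi : ∀ i, Integrable fun t : ℝ => φ i t * fm i t ^ p)
    (hIfipos : ∀ i, 0 < ∫ t : ℝ, φ i t * fm i t ^ p)
    (hcond : 0 ≤ ∫ x : Fin n → ℝ,
        (∏ i, φ i (x i) * fm i (x i) ^ (p - 1)) * (f x - ∏ i, fm i (x i))) :
    (1 / (1 - p)) * Real.log (∫ x : Fin n → ℝ, (∏ i, φ i (x i)) * f x ^ p)
      ≤ (∑ i, (1 / (1 - p)) * Real.log (∫ t : ℝ, φ i t * fm i t ^ p))
    ∧ (f =ᵐ[volume] (fun x => ∏ i, fm i (x i)) →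
        (1 / (1 - p)) * Real.log (∫ x : Fin n → ℝ, (∏ i, φ i (x i)) * f x ^ p)
          = ∑ i, (1 / (1 - p)) * Real.log (∫ t : ℝ, φ i t * fm i t ^ p)) := by
  have hp0 : (0:ℝ) < p := lt_trans one_pos hp
  set q : ℝ := p / (p - 1) with hq_def
  have hpq : p.HolderConjugate q := (Real.holderConjugate_iff_eq_conjExponent hp).2 rfl
  have hq0 : (0:ℝ) < q := hpq.symm.pos
  set A : ℝ := ∫ x : Fin n → ℝ, (∏ i, φ i (x i)) * f x ^ p with hA_def
  set B : ℝ := ∏ i, ∫ t : ℝ, φ i t * fm i t ^ p with hB_def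
  have hΦ0 : ∀ x : Fin n → ℝ, (0:ℝ) ≤ ∏ i, φ i (x i) :=
    fun x => Finset.prod_nonneg fun i _ => hφ0 i (x i)
  have hg0 : ∀ x : Fin n → ℝ, (0:ℝ) ≤ ∏ i, fm i (x i) :=
    fun x => Finset.prod_nonneg fun i _ => hfm0 i (x i)
  have hΦmeas : Measurable fun x : Fin n → ℝ => ∏ i, φ i (x i) :=
    Finset.measurable_prod _ fun i _ => (hφmeas i).comp (measurable_pi_apply i)
  have hgmeas : Measurable fun x : Fin n → ℝ => ∏ i, fm i (x i) :=
    Finset.measurable_prod _ fun i _ => (hfmmeas i).comp (measurable_pi_apply i)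
  -- pointwise identity for the product density term
  have haux : ∀ x : Fin n → ℝ,
      (∏ i, φ i (x i)) * (∏ i, fm i (x i)) ^ p = ∏ i, (φ i (x i) * fm i (x i) ^ p) := by
    intro x
    rw [← Real.finset_prod_rpow _ _ (fun i _ => hfm0 i (x i)), ← Finset.prod_mul_distrib]
  have hB_int : Integrable fun x : Fin n → ℝ => (∏ i, φ i (x i)) * (∏ i, fm i (x i)) ^ p := by
    simp_rw [haux]
    exact Integrable.fintype_prod hIfi
  have hBval : (∫ x : Fin n → ℝ, (∏ i, φ i (x i)) * (∏ i, fm i (x i)) ^ p) = B := by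
    simp_rw [haux]
    exact integral_fintype_prod_eq_prod fun i t => φ i t * fm i t ^ p
  have hBpos : 0 < B := Finset.prod_pos fun i _ => hIfipos i
  -- Hölder setup
  set u : (Fin n → ℝ) → ℝ := fun x => (∏ i, φ i (x i)) ^ (1/p) * f x with hu_def
  set v : (Fin n → ℝ) → ℝ := fun x => (∏ i, φ i (x i)) ^ (1/q) * (∏ i, fm i (x i)) ^ (p-1)
    with hv_def
  have hu0 : ∀ x, 0 ≤ u x := fun x => mul_nonneg (Real.rpow_nonneg (hΦ0 x) _) (hf0 x)
  have hv0 : ∀ x, 0 ≤ v x := fun x =>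
    mul_nonneg (Real.rpow_nonneg (hΦ0 x) _) (Real.rpow_nonneg (hg0 x) _)
  have humeas : Measurable u := (hΦmeas.pow_const _).mul hfmeas
  have hvmeas : Measurable v := (hΦmeas.pow_const _).mul (hgmeas.pow_const _)
  have hu_pow : ∀ x, u x ^ p = (∏ i, φ i (x i)) * f x ^ p := by
    intro x
    simp only [hu_def]
    rw [Real.mul_rpow (Real.rpow_nonneg (hΦ0 x) _) (hf0 x), ← Real.rpow_mul (hΦ0 x),
      one_div_mul_cancel hp0.ne', Real.rpow_one]
  have hv_pow : ∀ x, v x ^ q = (∏ i, φ i (x i)) * (∏ i, fm i (x i)) ^ p := by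
    intro x
    simp only [hv_def]
    rw [Real.mul_rpow (Real.rpow_nonneg (hΦ0 x) _) (Real.rpow_nonneg (hg0 x) _),
      ← Real.rpow_mul (hΦ0 x), ← Real.rpow_mul (hg0 x),
      one_div_mul_cancel hq0.ne', Real.rpow_one, hpq.sub_one_mul_conj]
  have huv : ∀ x, u x * v x = (∏ i, φ i (x i) * fm i (x i) ^ (p - 1)) * f x := by
    intro x
    simp only [hu_def, hv_def]
    rw [Finset.prod_mul_distrib, Real.finset_prod_rpow _ _ (fun i _ => hfm0 i (x i))]
    have h1 : (∏ i, φ i (x i)) ^ (1/p) * (∏ i, φ i (x i)) ^ (1/q) = ∏ i, φ i (x i) := by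
      rw [← Real.rpow_add' (hΦ0 x) (by rw [one_div, one_div, hpq.inv_add_inv_eq_one]; norm_num),
        one_div, one_div, hpq.inv_add_inv_eq_one, Real.rpow_one]
    calc (∏ i, φ i (x i)) ^ (1/p) * f x *
          ((∏ i, φ i (x i)) ^ (1/q) * (∏ i, fm i (x i)) ^ (p-1))
        = ((∏ i, φ i (x i)) ^ (1/p) * (∏ i, φ i (x i)) ^ (1/q)) *
            (∏ i, fm i (x i)) ^ (p-1) * f x := by ring
      _ = (∏ i, φ i (x i)) * (∏ i, fm i (x i)) ^ (p-1) * f x := by rw [h1]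
  -- memℒp facts
  have hu_Lp : MemLp u (ENNReal.ofReal p) volume := by
    refine memLp_of_integrable_rpow_aux hp0 humeas.aestronglyMeasurable ?_
    refine hIf.congr (Filter.Eventually.of_forall fun x => ?_)
    beta_reduce
    rw [Real.norm_of_nonneg (hu0 x), hu_pow x]
  have hv_Lq : MemLp v (ENNReal.ofReal q) volume := by
    refine memLp_of_integrable_rpow_aux hq0 hvmeas.aestronglyMeasurable ?_
    refine hB_int.congr (Filter.Eventually.of_forall fun x => ?_)
    beta_reduce
    rw [Real.norm_of_nonneg (hv0 x), hv_pow x]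
  -- the mixed term is integrable
  have huv_int : Integrable (fun x => u x * v x) volume := by
    rw [← memLp_one_iff_integrable]
    have h1 : (1:ℝ≥0∞) / 1 = 1 / ENNReal.ofReal p + 1 / ENNReal.ofReal q := by
      rw [one_div, one_div, one_div, ← ENNReal.ofReal_inv_of_pos hp0,
        ← ENNReal.ofReal_inv_of_pos hq0,
        ← ENNReal.ofReal_add (by positivity) (by positivity),
        hpq.inv_add_inv_eq_one, ENNReal.ofReal_one, inv_one]
    haveI : ENNReal.HolderTriple (ENNReal.ofReal p) (ENNReal.ofReal q) 1 :=
      ⟨by simpa [one_div] using h1.symm⟩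
    have := hv_Lq.smul (r := (1:ℝ≥0∞)) hu_Lp
    exact this
  -- Hölder's inequality
  have hHolder : (∫ x, u x * v x) ≤ A ^ (1/p) * B ^ (1/q) := by
    have h := integral_mul_le_Lp_mul_Lq_of_nonneg (μ := volume) hpq
      (Filter.Eventually.of_forall hu0) (Filter.Eventually.of_forall hv0) hu_Lp hv_Lq
    have hA' : (∫ x, u x ^ p) = A := by simp_rw [hu_pow]; exact hA_def.symm
    have hB' : (∫ x, v x ^ q) = B := by simp_rw [hv_pow]; exact hBval
    rw [hA', hB'] at h
    exact h
  -- from hcond : B ≤ ∫ u v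
  have hcond' : B ≤ ∫ x, u x * v x := by
    have hsplit : (∫ x : Fin n → ℝ,
        (∏ i, φ i (x i) * fm i (x i) ^ (p - 1)) * (f x - ∏ i, fm i (x i)))
        = (∫ x, u x * v x) - B := by
      rw [← hBval, ← integral_sub huv_int hB_int]
      refine integral_congr_ae (Filter.Eventually.of_forall fun x => ?_)
      beta_reduce
      have hgp : (∏ i, fm i (x i)) ^ (p-1) * (∏ i, fm i (x i)) = (∏ i, fm i (x i)) ^ p := by
        rw [Real.rpow_of_add_eq (hg0 x) hp0.ne' (by ring : (p-1) + 1 = p), Real.rpow_one]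
      have hhg : (∏ i, φ i (x i) * fm i (x i) ^ (p - 1)) * (∏ i, fm i (x i))
          = (∏ i, φ i (x i)) * (∏ i, fm i (x i)) ^ p := by
        rw [Finset.prod_mul_distrib, Real.finset_prod_rpow _ _ (fun i _ => hfm0 i (x i)),
          mul_assoc, hgp]
      rw [mul_sub, huv x, hhg]
    linarith [hcond, hsplit]
  -- B ≤ A
  have hBA : B ≤ A := by
    have h1 : B ^ (1/p) * B ^ (1/q) ≤ A ^ (1/p) * B ^ (1/q) := by
      calc B ^ (1/p) * B ^ (1/q) = B := by
            rw [← Real.rpow_add hBpos, one_div, one_div, hpq.inv_add_inv_eq_one, Real.rpow_one]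
        _ ≤ ∫ x, u x * v x := hcond'
        _ ≤ A ^ (1/p) * B ^ (1/q) := hHolder
    have h2 : B ^ (1/p) ≤ A ^ (1/p) :=
      le_of_mul_le_mul_right h1 (Real.rpow_pos_of_pos hBpos _)
    have h3 := Real.rpow_le_rpow (Real.rpow_nonneg hBpos.le _) h2 hp0.le
    rwa [← Real.rpow_mul hBpos.le, ← Real.rpow_mul hIfpos.le,
      one_div_mul_cancel hp0.ne', Real.rpow_one, Real.rpow_one] at h3
  -- conclusion
  have hc : 1/(1-p) < 0 := div_neg_of_pos_of_neg one_pos (by linarith)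
  have hsum : ∑ i, (1/(1-p)) * Real.log (∫ t, φ i t * fm i t ^ p)
      = (1/(1-p)) * Real.log B := by
    rw [← Finset.mul_sum, hB_def, Real.log_prod (fun i _ => (hIfipos i).ne')]
  constructor
  · rw [hsum]
    exact mul_le_mul_of_nonpos_left (Real.log_le_log hBpos hBA) hc.le
  · intro hfe
    have hAB : A = B := by
      rw [hA_def, ← hBval]
      refine integral_congr_ae ?_
      filter_upwards [hfe] with x hx
      rw [hx]
    rw [hsum, hAB]
end

section
/- For μ > n/2 + 1, the weighted expectation E[ (X^T X) · log(1 + X^T X) ] where X has the n-dimensional Pearson type VII density f_{VII}(x;μ) = (Γ(μ)/(π^{n/2} Γ(μ - n/2))) (1 + x^T x)^{-μ} equals (n/(2μ - n - 2)) · (Ψ(μ) - Ψ(μ - n/2 - 1)), where Ψ is the digamma function. -/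
open MeasureTheory Set Real Filter

/-- The digamma function Ψ(t) = d/dt log Γ(t). -/
noncomputable def digamma (t : ℝ) : ℝ := deriv (fun s => Real.log (Real.Gamma s)) t

-- Gamma derivative
lemma gamma_hasDerivAt {t : ℝ} (ht : 0 < t) :
    HasDerivAt Real.Gamma (Real.Gamma t * digamma t) t := by
  have hd : DifferentiableAt ℝ Real.Gamma t :=
    Real.differentiableAt_Gamma (fun m => ((neg_nonpos.mpr (Nat.cast_nonneg m)).trans_lt ht).ne')
  have hG : HasDerivAt Real.Gamma (deriv Real.Gamma t) t := hd.hasDerivAt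
  have hpos := Real.Gamma_pos_of_pos ht
  have hlog : HasDerivAt (fun s => Real.log (Real.Gamma s)) (deriv Real.Gamma t / Real.Gamma t) t :=
    hG.log hpos.ne'
  have : digamma t = deriv Real.Gamma t / Real.Gamma t := hlog.deriv
  rw [this, mul_div_cancel₀ _ hpos.ne']
  exact hG

lemma hasDerivAt_logGamma {t : ℝ} (ht : 0 < t) :
    HasDerivAt (fun s => Real.log (Real.Gamma s)) (digamma t) t := by
  have h := (gamma_hasDerivAt ht).log (Real.Gamma_pos_of_pos ht).ne'
  simpa [mul_div_assoc, div_self (Real.Gamma_pos_of_pos ht).ne', mul_comm,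
    mul_div_cancel_left₀ _ (Real.Gamma_pos_of_pos ht).ne'] using h

-- digamma recurrence
lemma digamma_add_one {x : ℝ} (hx : 0 < x) : digamma (x + 1) = digamma x + 1 / x := by
  have hg : HasDerivAt (fun y : ℝ => Real.log (y - 1) + Real.log (Real.Gamma (y - 1)))
      (1 / x + digamma x) (x + 1) := by
    have h1 : HasDerivAt (fun y : ℝ => y - 1) 1 (x + 1) := (hasDerivAt_id _).sub_const 1
    have h2 : HasDerivAt (fun y : ℝ => Real.log (y - 1)) (1 / x) (x + 1) := by
      have := h1.log (by simp [hx.ne'] : x + 1 - 1 ≠ 0)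
      simpa [one_div] using this
    have h3 : HasDerivAt (fun y : ℝ => Real.log (Real.Gamma (y - 1))) (digamma x) (x + 1) := by
      have hx' : HasDerivAt (fun s => Real.log (Real.Gamma s)) (digamma x) (x + 1 - 1) := by
        rw [add_sub_cancel_right]; exact hasDerivAt_logGamma hx
      have := hx'.comp (x + 1) h1
      simpa [Function.comp_def] using this
    exact h2.add h3
  have heq : (fun y : ℝ => Real.log (Real.Gamma y))
      =ᶠ[nhds (x + 1)] (fun y : ℝ => Real.log (y - 1) + Real.log (Real.Gamma (y - 1))) := by
    have hmem : Ioi (1 : ℝ) ∈ nhds (x + 1) := Ioi_mem_nhds (by linarith)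
    filter_upwards [hmem] with y hy
    have hy1 : (0 : ℝ) < y - 1 := by simpa using hy
    have : Real.Gamma y = (y - 1) * Real.Gamma (y - 1) := by
      have := Real.Gamma_add_one hy1.ne'
      rw [sub_add_cancel] at this
      exact this
    rw [this, Real.log_mul hy1.ne' (Real.Gamma_pos_of_pos hy1).ne']
  have hf : HasDerivAt (fun y : ℝ => Real.log (Real.Gamma y)) (1 / x + digamma x) (x + 1) :=
    HasDerivAt.congr_of_eventuallyEq hg heq
  have := hf.deriv
  rw [show digamma (x + 1) = deriv (fun s => Real.log (Real.Gamma s)) (x + 1) from rfl, this]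
  ring

-- real beta integral
lemma real_beta {a b : ℝ} (ha : 0 < a) (hb : 0 < b) :
    ∫ x in (0:ℝ)..1, x ^ (a - 1) * (1 - x) ^ (b - 1)
      = Real.Gamma a * Real.Gamma b / Real.Gamma (a + b) := by
  have h := Complex.Gamma_mul_Gamma_eq_betaIntegral (s := (a : ℂ)) (t := (b : ℂ))
    (by simpa using ha) (by simpa using hb)
  have hbeta : Complex.betaIntegral a b
      = ((∫ x in (0:ℝ)..1, x ^ (a - 1) * (1 - x) ^ (b - 1) : ℝ) : ℂ) := by
    rw [Complex.betaIntegral, ← intervalIntegral.integral_ofReal]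
    apply intervalIntegral.integral_congr
    intro x hx
    rw [uIcc_of_le zero_le_one] at hx
    simp only []
    rw [Complex.ofReal_mul, Complex.ofReal_cpow hx.1,
      Complex.ofReal_cpow (by linarith [hx.2] : (0:ℝ) ≤ 1 - x)]
    push_cast
    ring
  rw [hbeta, show (a : ℂ) + b = ((a + b : ℝ) : ℂ) by push_cast; ring,
    Complex.Gamma_ofReal, Complex.Gamma_ofReal, Complex.Gamma_ofReal] at h
  have h' : Real.Gamma a * Real.Gamma b
      = Real.Gamma (a + b) * ∫ x in (0:ℝ)..1, x ^ (a - 1) * (1 - x) ^ (b - 1) := by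
    exact_mod_cast h
  have hab : Real.Gamma (a + b) ≠ 0 := (Real.Gamma_pos_of_pos (by linarith)).ne'
  field_simp [h']
  rw [h']; ring

-- rpow algebra helper
lemma aux_calc {a b r c : ℝ} (hr : 0 < r) (hc : 0 < c) :
    2 * r * (c ^ 2)⁻¹ * (c⁻¹ ^ (a - 1) * (r ^ 2 * c⁻¹) ^ (b - 1))
      = 2 * (r ^ (2 * b - 1) * c ^ (-(a + b))) := by
  have h2 : ((c ^ 2 : ℝ))⁻¹ = c ^ (-2 : ℝ) := by
    rw [← Real.rpow_natCast c 2, ← Real.rpow_neg hc.le]; norm_num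
  have h3 : (c⁻¹ : ℝ) ^ (a - 1) = c ^ (1 - a) := by
    rw [← Real.rpow_neg_one c, ← Real.rpow_mul hc.le]; congr 1; ring
  have h4 : ((r ^ 2 * c⁻¹ : ℝ)) ^ (b - 1) = r ^ (2 * b - 2) * c ^ (1 - b) := by
    rw [Real.mul_rpow (by positivity) (by positivity), ← Real.rpow_natCast r 2,
      ← Real.rpow_mul hr.le, ← Real.rpow_neg_one c, ← Real.rpow_mul hc.le]
    push_cast
    rw [show (2:ℝ) * (b - 1) = 2 * b - 2 by ring, show (-1:ℝ) * (b - 1) = 1 - b by ring]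
  have h5 : c ^ (-2:ℝ) * (c ^ (1 - a) * c ^ (1 - b)) = c ^ (-(a + b)) := by
    rw [← Real.rpow_add hc, ← Real.rpow_add hc]; congr 1; ring
  have h6 : r ^ (1:ℝ) * r ^ (2 * b - 2) = r ^ (2 * b - 1) := by
    rw [← Real.rpow_add hr]; congr 1; ring
  calc 2 * r * (c ^ 2)⁻¹ * (c⁻¹ ^ (a - 1) * (r ^ 2 * c⁻¹) ^ (b - 1))
      = 2 * (r ^ (1:ℝ) * r ^ (2 * b - 2)) * (c ^ (-2:ℝ) * (c ^ (1 - a) * c ^ (1 - b))) := by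
        rw [h2, h3, h4, Real.rpow_one]; ring
    _ = 2 * (r ^ (2 * b - 1) * c ^ (-(a + b))) := by rw [h5, h6]; ring

-- substituted beta integral
lemma beta_subst {a b : ℝ} (ha : 0 < a) (hb : 0 < b) :
    ∫ r in Ioi (0:ℝ), r ^ (2 * b - 1) * (1 + r ^ 2) ^ (-(a + b))
      = Real.Gamma a * Real.Gamma b / (2 * Real.Gamma (a + b)) := by
  set f : ℝ → ℝ := fun r => (1 + r ^ 2)⁻¹ with hf
  set f' : ℝ → ℝ := fun r => -(2 * r) / (1 + r ^ 2) ^ 2 with hf'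
  have hderiv : ∀ r ∈ Ioi (0:ℝ), HasDerivWithinAt f (f' r) (Ioi 0) r := by
    intro r hr
    have h1 : HasDerivAt (fun r : ℝ => 1 + r ^ 2) (2 * r) r := by
      simpa using (hasDerivAt_pow 2 r).const_add 1
    have h2 : (1 : ℝ) + r ^ 2 ≠ 0 := by positivity
    exact (h1.inv h2).hasDerivWithinAt
  have hinj : InjOn f (Ioi (0:ℝ)) := by
    intro x hx y hy hxy
    have h1 : (1 : ℝ) + x ^ 2 = 1 + y ^ 2 := by
      have := inv_injective hxy
      exact this
    have h2 : (x - y) * (x + y) = 0 := by nlinarith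
    rcases mul_eq_zero.1 h2 with h | h
    · linarith
    · have : (0:ℝ) < x + y := by have := mem_Ioi.1 hx; have := mem_Ioi.1 hy; linarith
      linarith
  have himg : f '' Ioi (0:ℝ) = Ioo (0:ℝ) 1 := by
    ext u
    constructor
    · rintro ⟨r, hr, rfl⟩
      have hr0 : (0:ℝ) < r := hr
      constructor
      · positivity
      · rw [inv_lt_one_iff₀]; right; nlinarith
    · rintro ⟨hu0, hu1⟩
      refine ⟨Real.sqrt (u⁻¹ - 1), ?_, ?_⟩
      · have : (1:ℝ) < u⁻¹ := (one_lt_inv₀ hu0).2 hu1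
        exact Real.sqrt_pos.2 (by linarith)
      · have h1 : (1:ℝ) ≤ u⁻¹ := le_of_lt ((one_lt_inv₀ hu0).2 hu1)
        simp only [f, Real.sq_sqrt (by linarith : (0:ℝ) ≤ u⁻¹ - 1)]
        rw [add_sub_cancel, inv_inv]
  have hchg := integral_image_eq_integral_abs_deriv_smul measurableSet_Ioi hderiv hinj
    (fun u => u ^ (a - 1) * (1 - u) ^ (b - 1))
  rw [himg] at hchg
  have hlhs : ∫ u in Ioo (0:ℝ) 1, u ^ (a - 1) * (1 - u) ^ (b - 1)
      = Real.Gamma a * Real.Gamma b / Real.Gamma (a + b) := by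
    rw [← real_beta ha hb, intervalIntegral.integral_of_le zero_le_one,
      ← MeasureTheory.integral_Ioc_eq_integral_Ioo]
  have hrhs : ∫ r in Ioi (0:ℝ), |f' r| • (f r ^ (a - 1) * (1 - f r) ^ (b - 1))
      = ∫ r in Ioi (0:ℝ), 2 * (r ^ (2 * b - 1) * (1 + r ^ 2) ^ (-(a + b))) := by
    apply setIntegral_congr_fun measurableSet_Ioi
    intro r hr
    have hr0 : (0:ℝ) < r := hr
    have hc : (0:ℝ) < 1 + r ^ 2 := by positivity
    have habs : |f' r| = 2 * r * ((1 + r ^ 2) ^ (2:ℕ))⁻¹ := by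
      rw [hf', abs_div, abs_neg, abs_of_nonneg (by positivity : (0:ℝ) ≤ 2 * r),
        abs_of_nonneg (by positivity : (0:ℝ) ≤ (1 + r ^ 2) ^ 2), div_eq_mul_inv]
    simp only [smul_eq_mul, hf]
    rw [habs, show 1 - (1 + r ^ 2)⁻¹ = r ^ 2 * (1 + r ^ 2)⁻¹ by field_simp; ring]
    exact aux_calc hr0 hc
  rw [hchg] at hlhs
  rw [hrhs] at hlhs
  rw [MeasureTheory.integral_const_mul] at hlhs
  have h2 : Real.Gamma (a + b) ≠ 0 := (Real.Gamma_pos_of_pos (by linarith)).ne'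
  rw [eq_div_iff (by positivity : (2:ℝ) * Real.Gamma (a + b) ≠ 0)]
  rw [eq_div_iff h2] at hlhs
  linarith

variable {n : ℕ}

abbrev Eucl (n : ℕ) := EuclideanSpace ℝ (Fin n)

-- value of the radial integral
lemma G_eq (hn : 0 < n) {s : ℝ} (hs : (n : ℝ) / 2 < s) :
    ∫ x : Eucl n, (1 + ‖x‖ ^ 2) ^ (-s)
      = Real.pi ^ ((n : ℝ) / 2) * Real.Gamma (s - n / 2) / Real.Gamma s := by
  haveI : Nonempty (Fin n) := Fin.pos_iff_nonempty.1 hn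
  haveI : Nontrivial (Eucl n) := inferInstance
  have h := MeasureTheory.integral_fun_norm_addHaar (volume : Measure (Eucl n))
    (fun r : ℝ => (1 + r ^ 2) ^ (-s))
  simp only [finrank_euclideanSpace_fin] at h
  rw [show (∫ x : Eucl n, (1 + ‖x‖ ^ 2) ^ (-s)) =
    ∫ x : Eucl n, (fun r : ℝ => (1 + r ^ 2) ^ (-s)) ‖x‖ from rfl, h]
  have hvol : ((volume : Measure (Eucl n)) (Metric.ball 0 1)).toReal
      = Real.sqrt Real.pi ^ n / Real.Gamma (n / 2 + 1) := by
    rw [EuclideanSpace.volume_ball]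
    simp [Fintype.card_fin, ENNReal.toReal_ofReal
      (by positivity : (0:ℝ) ≤ Real.sqrt Real.pi ^ n / Real.Gamma ((n:ℝ) / 2 + 1))]
  have hn2 : (0:ℝ) < (n:ℝ) / 2 := by positivity
  have ha : (0:ℝ) < s - n / 2 := by linarith
  have hinner : (∫ y in Ioi (0:ℝ), y ^ (n - 1) • ((1 + y ^ 2) ^ (-s)))
      = Real.Gamma (s - n / 2) * Real.Gamma (n / 2) / (2 * Real.Gamma s) := by
    have hcong : (∫ y in Ioi (0:ℝ), y ^ (n - 1) • ((1 + y ^ 2) ^ (-s)))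
        = ∫ y in Ioi (0:ℝ), y ^ (2 * ((n:ℝ)/2) - 1) * (1 + y ^ 2) ^ (-((s - n/2) + n/2)) := by
      apply setIntegral_congr_fun measurableSet_Ioi
      intro y hy
      have hy0 : (0:ℝ) < y := hy
      have : (y : ℝ) ^ (n - 1) = y ^ (2 * ((n:ℝ)/2) - 1) := by
        rw [← Real.rpow_natCast y (n - 1)]
        congr 1
        rw [Nat.cast_sub hn]
        push_cast; ring
      simp only [smul_eq_mul]
      rw [this]
      ring_nf
    rw [hcong, beta_subst ha hn2, sub_add_cancel]
  rw [measureReal_def, hvol, hinner]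
  have hΓn : Real.Gamma ((n:ℝ) / 2 + 1) = (n / 2) * Real.Gamma ((n:ℝ)/2) :=
    Real.Gamma_add_one hn2.ne'
  have hsqrt : Real.sqrt Real.pi ^ n = Real.pi ^ ((n:ℝ) / 2) := by
    rw [Real.sqrt_eq_rpow, ← Real.rpow_natCast (Real.pi ^ ((1:ℝ)/2)) n,
      ← Real.rpow_mul Real.pi_pos.le]
    congr 1; ring
  rw [hΓn, hsqrt, nsmul_eq_mul, smul_eq_mul]
  have h1 : Real.Gamma ((n:ℝ)/2) ≠ 0 := (Real.Gamma_pos_of_pos hn2).ne'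
  have h2 : Real.Gamma s ≠ 0 := (Real.Gamma_pos_of_pos (by linarith)).ne'
  have h3 : (n:ℝ) ≠ 0 := Nat.cast_ne_zero.2 hn.ne'
  field_simp

-- integrability
lemma int_pow (hn : 0 < n) {s : ℝ} (hs : (n : ℝ) / 2 < s) :
    Integrable (fun x : Eucl n => (1 + ‖x‖ ^ 2) ^ (-s)) := by
  have h : ((Module.finrank ℝ (Eucl n) : ℝ)) < 2 * s := by
    rw [finrank_euclideanSpace_fin]; linarith
  have := integrable_rpow_neg_one_add_norm_sq (μ := (volume : Measure (Eucl n))) h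
  simpa [neg_div, mul_div_assoc] using this

-- derivative under integral sign
lemma hasDeriv_G (hn : 0 < n) {s₀ : ℝ} (hs : (n : ℝ) / 2 < s₀) :
    Integrable (fun x : Eucl n => -(Real.log (1 + ‖x‖ ^ 2) * (1 + ‖x‖ ^ 2) ^ (-s₀))) ∧
    HasDerivAt (fun s => ∫ x : Eucl n, (1 + ‖x‖ ^ 2) ^ (-s))
      (∫ x : Eucl n, -(Real.log (1 + ‖x‖ ^ 2) * (1 + ‖x‖ ^ 2) ^ (-s₀))) s₀ := by
  set ε : ℝ := (s₀ - n / 2) / 2 with hε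
  have hε0 : 0 < ε := by simp only [hε]; linarith
  set δ : ℝ := ε / 2 with hδ
  have hδ0 : 0 < δ := by positivity
  have hcont : ∀ s : ℝ, Continuous fun x : Eucl n => (1 + ‖x‖ ^ 2) ^ (-s) := by
    intro s
    exact Continuous.rpow_const (by continuity) (fun x => Or.inl (by positivity))
  have hcontlog : Continuous fun x : Eucl n => Real.log (1 + ‖x‖ ^ 2) :=
    Continuous.log (by continuity) (fun x => by positivity)
  have key := hasDerivAt_integral_of_dominated_loc_of_deriv_le (μ := (volume : Measure (Eucl n)))
    (F := fun s (x : Eucl n) => (1 + ‖x‖ ^ 2) ^ (-s))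
    (F' := fun s (x : Eucl n) => -(Real.log (1 + ‖x‖ ^ 2) * (1 + ‖x‖ ^ 2) ^ (-s)))
    (x₀ := s₀) (bound := fun x : Eucl n => δ⁻¹ * (1 + ‖x‖ ^ 2) ^ (-(s₀ - ε - δ)))
    (Metric.ball_mem_nhds s₀ hε0)
    (Eventually.of_forall fun s => ((hcont s).aestronglyMeasurable))
    (int_pow hn hs)
    ((hcontlog.mul (hcont s₀)).neg.aestronglyMeasurable)
    ?_ ?_ ?_
  · exact key
  · -- bound
    refine MeasureTheory.ae_of_all _ fun a s hsb => ?_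
    set t : ℝ := ‖a‖ ^ 2 with ht
    have ht0 : (0:ℝ) ≤ t := by positivity
    have h1t : (1:ℝ) ≤ 1 + t := by linarith
    have hlognn : 0 ≤ Real.log (1 + t) := Real.log_nonneg h1t
    rw [norm_neg, Real.norm_eq_abs,
      abs_of_nonneg (mul_nonneg hlognn (Real.rpow_nonneg (by linarith) _))]
    have hsball : |s - s₀| < ε := by simpa [Real.dist_eq] using Metric.mem_ball.1 hsb
    have h2 : (1 + t) ^ (-s) ≤ (1 + t) ^ (ε - s₀) := by
      apply Real.rpow_le_rpow_of_exponent_le h1t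
      have := abs_lt.1 hsball
      linarith [this.1]
    have h3 : Real.log (1 + t) ≤ δ⁻¹ * (1 + t) ^ δ := by
      have hlr : Real.log ((1 + t) ^ δ) = δ * Real.log (1 + t) :=
        Real.log_rpow (by linarith) δ
      have hle : Real.log ((1 + t) ^ δ) ≤ (1 + t) ^ δ := by
        calc Real.log ((1 + t) ^ δ) ≤ (1 + t) ^ δ - 1 :=
              Real.log_le_sub_one_of_pos (Real.rpow_pos_of_pos (by linarith) δ)
          _ ≤ (1 + t) ^ δ := by linarith
      rw [hlr] at hle
      have h' := mul_le_mul_of_nonneg_left hle (inv_pos.2 hδ0).le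
      calc Real.log (1 + t) = δ⁻¹ * (δ * Real.log (1 + t)) := by field_simp
        _ ≤ δ⁻¹ * (1 + t) ^ δ := h'
    calc Real.log (1 + t) * (1 + t) ^ (-s)
        ≤ Real.log (1 + t) * (1 + t) ^ (ε - s₀) :=
          mul_le_mul_of_nonneg_left h2 hlognn
      _ ≤ (δ⁻¹ * (1 + t) ^ δ) * (1 + t) ^ (ε - s₀) :=
          mul_le_mul_of_nonneg_right h3 (Real.rpow_nonneg (by linarith) _)
      _ = δ⁻¹ * (1 + t) ^ (-(s₀ - ε - δ)) := by
          rw [mul_assoc, ← Real.rpow_add (by linarith : (0:ℝ) < 1 + t)]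
          congr 2
          ring
  · -- bound integrable
    have : Integrable (fun x : Eucl n => (1 + ‖x‖ ^ 2) ^ (-(s₀ - ε - δ))) :=
      int_pow hn (by simp only [hε, hδ] at *; linarith)
    exact this.const_mul δ⁻¹
  · -- differentiability
    refine MeasureTheory.ae_of_all _ fun a s hsb => ?_
    have hc : (0:ℝ) < 1 + ‖a‖ ^ 2 := by positivity
    have h := ((Real.hasStrictDerivAt_const_rpow hc (-s)).hasDerivAt).comp s (hasDerivAt_neg s)
    convert h using 1
    rfl
    rfl
    ring

-- the log integral
lemma log_integral (hn : 0 < n) {s : ℝ} (hs : (n : ℝ) / 2 < s) :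
    ∫ x : Eucl n, Real.log (1 + ‖x‖ ^ 2) * (1 + ‖x‖ ^ 2) ^ (-s)
      = Real.pi ^ ((n : ℝ) / 2) * Real.Gamma (s - n / 2) / Real.Gamma s
          * (digamma s - digamma (s - n / 2)) := by
  have hs0 : (0:ℝ) < s := lt_of_le_of_lt (by positivity) hs
  have hsn : (0:ℝ) < s - n / 2 := by linarith
  have hG := (hasDeriv_G hn hs).2
  have h1 : HasDerivAt (fun u : ℝ => Real.Gamma (u - n / 2))
      (Real.Gamma (s - n / 2) * digamma (s - n / 2)) s := by
    have hi : HasDerivAt (fun u : ℝ => u - (n:ℝ)/2) 1 s := (hasDerivAt_id s).sub_const _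
    have hcomp : HasDerivAt Real.Gamma
        (Real.Gamma (s - n / 2) * digamma (s - n / 2)) (s - (n:ℝ)/2) := gamma_hasDerivAt hsn
    have := hcomp.comp s hi
    simpa [Function.comp_def] using this
  have h2 := gamma_hasDerivAt hs0
  have hΓs : Real.Gamma s ≠ 0 := (Real.Gamma_pos_of_pos hs0).ne'
  have h3 := h1.div h2 hΓs
  have h4 := h3.const_mul (Real.pi ^ ((n:ℝ)/2))
  have heq : (fun u : ℝ => Real.pi ^ ((n:ℝ)/2) * (Real.Gamma (u - n/2) / Real.Gamma u))
      =ᶠ[nhds s] (fun u => ∫ x : Eucl n, (1 + ‖x‖ ^ 2) ^ (-u)) := by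
    filter_upwards [Ioi_mem_nhds hs] with u hu
    rw [G_eq hn hu]; ring
  have h5 := hG.congr_of_eventuallyEq heq
  have huniq := h5.unique h4
  rw [MeasureTheory.integral_neg] at huniq
  have hint : (∫ x : Eucl n, Real.log (1 + ‖x‖ ^ 2) * (1 + ‖x‖ ^ 2) ^ (-s))
      = -(Real.pi ^ ((n:ℝ)/2) *
        ((Real.Gamma (s - n / 2) * digamma (s - n / 2) * Real.Gamma s -
          Real.Gamma (s - n / 2) * (Real.Gamma s * digamma s)) / Real.Gamma s ^ 2)) := by
    rw [← huniq]; ring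
  rw [hint]
  field_simp
  ring

lemma final_alg (P G1 G2 p q x y m : ℝ) (hP : P ≠ 0) (hG1 : G1 ≠ 0) (hG2 : G2 ≠ 0)
    (hx : x ≠ 0) (hy : y ≠ 0) (hm : x - y = m / 2) :
    x * G1 / (P * (y * G2)) * (P * G2 / G1 * (p - q)
        - P * (y * G2) / (x * G1) * (p + 1 / x - (q + 1 / y)))
      = m / (2 * y) * (p + 1 / x - q) := by
  rw [show m = 2 * (x - y) by rw [hm]; ring]
  field_simp
  ring

set_option maxHeartbeats 1000000 in
/-- E[(XᵀX)·log(1+XᵀX)] for the Pearson type VII density equals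
(n/(2μ-n-2))·(Ψ(μ) - Ψ(μ-n/2-1)). -/
theorem stmt_6 (n : ℕ) (hn : 0 < n) (μ : ℝ) (hμ : (n : ℝ) / 2 + 1 < μ) :
    (∫ x : Fin n → ℝ,
        (Real.Gamma μ / (Real.pi ^ ((n : ℝ) / 2) * Real.Gamma (μ - n / 2)))
          * (1 + ∑ i, x i ^ 2) ^ (-μ)
          * ((∑ i, x i ^ 2) * Real.log (1 + ∑ i, x i ^ 2)))
      = ((n : ℝ) / (2 * μ - n - 2)) * (digamma μ - digamma (μ - n / 2 - 1)) := by
  have hn2 : (0:ℝ) < (n:ℝ)/2 := by positivity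
  have hx : (0:ℝ) < μ - 1 := by linarith
  have hy : (0:ℝ) < μ - n/2 - 1 := by linarith
  have hμn : (n:ℝ)/2 < μ := by linarith
  have hμn1 : (n:ℝ)/2 < μ - 1 := by linarith
  set C : ℝ := Real.Gamma μ / (Real.pi ^ ((n:ℝ)/2) * Real.Gamma (μ - n/2)) with hC
  have htrans : (∫ x : Fin n → ℝ,
        C * (1 + ∑ i, x i ^ 2) ^ (-μ) * ((∑ i, x i ^ 2) * Real.log (1 + ∑ i, x i ^ 2)))
      = ∫ y : Eucl n, C * (1 + ‖y‖ ^ 2) ^ (-μ) * (‖y‖ ^ 2 * Real.log (1 + ‖y‖ ^ 2)) := by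
    rw [← (EuclideanSpace.volume_preserving_symm_measurableEquiv_toLp (Fin n)).integral_comp
      (MeasurableEquiv.toLp 2 (Fin n → ℝ)).symm.measurableEmbedding
      (fun x : Fin n → ℝ =>
        C * (1 + ∑ i, x i ^ 2) ^ (-μ) * ((∑ i, x i ^ 2) * Real.log (1 + ∑ i, x i ^ 2)))]
    congr 1
    funext y
    have hsum : ∑ i, ((MeasurableEquiv.toLp 2 (Fin n → ℝ)).symm y) i ^ 2 = ‖y‖ ^ 2 := by
      rw [EuclideanSpace.norm_eq,
        Real.sq_sqrt (Finset.sum_nonneg fun i _ => sq_nonneg _)]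
      simp [Real.norm_eq_abs, sq_abs]
    simp only [hsum]
  rw [htrans]
  have hpoint : ∀ y : Eucl n,
      C * (1 + ‖y‖ ^ 2) ^ (-μ) * (‖y‖ ^ 2 * Real.log (1 + ‖y‖ ^ 2))
      = C * (Real.log (1 + ‖y‖ ^ 2) * (1 + ‖y‖ ^ 2) ^ (-(μ-1))
          - Real.log (1 + ‖y‖ ^ 2) * (1 + ‖y‖ ^ 2) ^ (-μ)) := by
    intro y
    have hc : (0:ℝ) < 1 + ‖y‖ ^ 2 := by positivity
    have hr : (1 + ‖y‖ ^ 2) ^ (-(μ-1)) = (1 + ‖y‖ ^ 2) ^ (-μ) * (1 + ‖y‖ ^ 2) := by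
      rw [show -(μ-1) = -μ + 1 by ring, Real.rpow_add hc, Real.rpow_one]
    rw [hr]; ring
  simp_rw [hpoint]
  rw [MeasureTheory.integral_const_mul]
  have i1 : Integrable (fun y : Eucl n =>
      Real.log (1 + ‖y‖ ^ 2) * (1 + ‖y‖ ^ 2) ^ (-(μ-1))) := by
    have := (hasDeriv_G hn hμn1).1
    simpa only [Pi.neg_def, neg_neg] using this.neg
  have i2 : Integrable (fun y : Eucl n =>
      Real.log (1 + ‖y‖ ^ 2) * (1 + ‖y‖ ^ 2) ^ (-μ)) := by
    have := (hasDeriv_G hn hμn).1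
    simpa only [Pi.neg_def, neg_neg] using this.neg
  rw [MeasureTheory.integral_sub i1 i2, log_integral hn hμn1, log_integral hn hμn]
  rw [show μ - 1 - (n:ℝ)/2 = μ - (n:ℝ)/2 - 1 by ring]
  have hG1 : Real.Gamma μ = (μ-1) * Real.Gamma (μ-1) := by
    have := Real.Gamma_add_one hx.ne'
    rw [sub_add_cancel] at this
    exact this
  have hG2 : Real.Gamma (μ - n/2) = (μ - n/2 - 1) * Real.Gamma (μ - n/2 - 1) := by
    have := Real.Gamma_add_one hy.ne'
    rw [sub_add_cancel] at this
    exact this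
  have hd1 : digamma μ = digamma (μ-1) + 1/(μ-1) := by
    have := digamma_add_one hx
    rw [sub_add_cancel] at this
    exact this
  have hd2 : digamma (μ - n/2) = digamma (μ - n/2 - 1) + 1/(μ - n/2 - 1) := by
    have := digamma_add_one hy
    rw [sub_add_cancel] at this
    exact this
  have hne1 : Real.Gamma (μ-1) ≠ 0 := (Real.Gamma_pos_of_pos hx).ne'
  have hne2 : Real.Gamma (μ - n/2 - 1) ≠ 0 := (Real.Gamma_pos_of_pos hy).ne'
  have hneπ : Real.pi ^ ((n:ℝ)/2) ≠ 0 := (Real.rpow_pos_of_pos Real.pi_pos _).ne'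
  rw [hC, hG1, hG2, hd1, hd2,
    show 2 * μ - (n:ℝ) - 2 = 2 * (μ - (n:ℝ)/2 - 1) by ring]
  exact final_alg _ _ _ _ _ _ _ _ hneπ hne1 hne2 hx.ne' hy.ne' (by ring)
end

section
/- For p > n/(n+2) with p ≠ 1 and positive definite n×n matrix C, the function g_{p,C}(x) = A_p (1 + (1−p)β x^T C^{-1} x)_+^{1/(p−1)}, with β = 1/(2p − n(1−p)) and A_p as specified, is a probability density on ℝ^n: it is nonnegative and integrates to 1. -/
open MeasureTheory Matrix

/-- The normalizing constant A_p of the Rényi-maximizing density. -/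
noncomputable def Ap (n : ℕ) (p : ℝ) (C : Matrix (Fin n) (Fin n) ℝ) : ℝ :=
  if p < 1 then
    Real.Gamma (1 / (1 - p)) * ((1 / (2 * p - n * (1 - p))) * (1 - p)) ^ ((n : ℝ) / 2) /
      (Real.Gamma (1 / (1 - p) - n / 2) * Real.pi ^ ((n : ℝ) / 2) * C.det ^ ((1 : ℝ) / 2))
  else
    Real.Gamma (p / (p - 1) + n / 2) * ((1 / (2 * p - n * (1 - p))) * (p - 1)) ^ ((n : ℝ) / 2) /
      (Real.Gamma (p / (p - 1)) * Real.pi ^ ((n : ℝ) / 2) * C.det ^ ((1 : ℝ) / 2))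

/-- The Rényi-maximizing (Student-t / Student-r) density g_{p,C}. -/
noncomputable def gpc (n : ℕ) (p : ℝ) (C : Matrix (Fin n) (Fin n) ℝ) (x : Fin n → ℝ) : ℝ :=
  Ap n p C *
    max (1 + (1 - p) * (1 / (2 * p - n * (1 - p))) * (x ⬝ᵥ C⁻¹.mulVec x)) 0 ^ (1 / (p - 1))

open Real Set intervalIntegral

lemma realBeta {a b : ℝ} (ha : 0 < a) (hb : 0 < b) :
    ∫ x in (0:ℝ)..1, x ^ (a-1) * (1-x) ^ (b-1) = Gamma a * Gamma b / Gamma (a+b) := by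
  have h := Complex.Gamma_mul_Gamma_eq_betaIntegral (s := a) (t := b) (by simpa) (by simpa)
  have hG : Complex.Gamma ((a:ℂ) + b) ≠ 0 := by
    rw [← Complex.ofReal_add, Complex.Gamma_ofReal]
    exact_mod_cast Real.Gamma_ne_zero (fun m => by push_cast; nlinarith [Nat.cast_nonneg (α := ℝ) m])
  have hbeta : Complex.betaIntegral a b =
      ((∫ x in (0:ℝ)..1, x ^ (a-1) * (1-x) ^ (b-1) : ℝ) : ℂ) := by
    rw [Complex.betaIntegral, ← intervalIntegral.integral_ofReal]
    refine intervalIntegral.integral_congr fun x hx => ?_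
    rw [Set.uIcc_of_le zero_le_one] at hx
    rw [Complex.ofReal_mul, Complex.ofReal_cpow hx.1, Complex.ofReal_cpow (by linarith [hx.2])]
    push_cast
    ring_nf
  have h2 : (Complex.Gamma a * Complex.Gamma b) / Complex.Gamma ((a:ℂ)+b) = Complex.betaIntegral a b := by
    rw [h]; field_simp
  rw [hbeta] at h2
  rw [Complex.Gamma_ofReal, Complex.Gamma_ofReal, ← Complex.ofReal_add, Complex.Gamma_ofReal] at h2
  exact_mod_cast h2.symm

lemma subst_sq {c : ℝ} (hc : 0 < c) (m : ℝ) (F : ℝ → ℝ) :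
    ∫ t in Ioi (0:ℝ), (1/2) * c ^ (-(m+1)/2) * t ^ ((m-1)/2) * F t
      = ∫ r in Ioi (0:ℝ), r ^ m * F (c * r ^ 2) := by
  have himg : (fun r : ℝ => c * r ^ 2) '' Ioi 0 = Ioi 0 := by
    ext t
    constructor
    · rintro ⟨r, hr, rfl⟩; exact mul_pos hc (pow_pos hr 2)
    · intro ht
      refine ⟨Real.sqrt (t / c), Real.sqrt_pos.2 (div_pos ht hc), ?_⟩
      show c * Real.sqrt (t/c) ^ 2 = t
      rw [Real.sq_sqrt (le_of_lt (div_pos ht hc))]; field_simp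
  have hderiv : ∀ r ∈ Ioi (0:ℝ), HasDerivWithinAt (fun r : ℝ => c * r ^ 2) (2 * c * r) (Ioi 0) r := by
    intro r _
    have := ((hasDerivAt_pow 2 r).const_mul c).hasDerivWithinAt (s := Ioi (0:ℝ))
    refine this.congr_deriv ?_; ring
  have hinj : InjOn (fun r : ℝ => c * r ^ 2) (Ioi 0) := by
    intro x hx y hy hxy
    simp only at hxy
    have h2 : x ^ 2 = y ^ 2 := mul_left_cancel₀ hc.ne' hxy
    have h3 : (x - y) * (x + y) = 0 := by nlinarith
    rcases mul_eq_zero.1 h3 with h | h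
    · linarith
    · nlinarith [hx.out, hy.out]
  have := integral_image_eq_integral_abs_deriv_smul measurableSet_Ioi hderiv hinj
    (fun t => (1/2) * c ^ (-(m+1)/2) * t ^ ((m-1)/2) * F t)
  rw [himg] at this
  rw [this]
  refine setIntegral_congr_fun measurableSet_Ioi fun r hr => ?_
  have hr0 : (0:ℝ) < r := hr
  have h1 : (c * r^2) ^ ((m-1)/2) = c ^ ((m-1)/2) * r ^ (m-1) := by
    rw [mul_rpow hc.le (by positivity), ← Real.rpow_natCast r 2, ← Real.rpow_mul hr0.le,
      show ((2:ℕ):ℝ) * ((m-1)/2) = m-1 by push_cast; ring]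
  have hc1 : c ^ (1:ℝ) * (c ^ (-(m+1)/2) * c ^ ((m-1)/2)) = 1 := by
    rw [← Real.rpow_add hc, ← Real.rpow_add hc,
      show (1 + (-(m+1)/2 + (m-1)/2) : ℝ) = 0 by ring, Real.rpow_zero]
  have hr1 : r ^ (1:ℝ) * r ^ (m-1) = r ^ m := by
    rw [← Real.rpow_add hr0]; ring_nf
  have h2 : (2*c*r) * (1/2 * c ^ (-(m+1)/2) * (c ^ ((m-1)/2) * r ^ (m-1))) = r ^ m := by
    calc (2*c*r) * (1/2 * c ^ (-(m+1)/2) * (c ^ ((m-1)/2) * r ^ (m-1)))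
        = (c ^ (1:ℝ) * (c ^ (-(m+1)/2) * c ^ ((m-1)/2))) * (r ^ (1:ℝ) * r ^ (m-1)) := by
          rw [Real.rpow_one, Real.rpow_one]; ring
      _ = r ^ m := by rw [hc1, hr1, one_mul]
  rw [smul_eq_mul, abs_of_pos (by positivity), h1, ← h2]; ring

lemma subst_mobius (a b : ℝ) :
    ∫ t in Ioi (0:ℝ), t ^ (a-1) * (1+t) ^ (-(a+b)) = ∫ u in Ioo (0:ℝ) 1, u ^ (a-1) * (1-u) ^ (b-1) := by
  have himg : (fun u : ℝ => u / (1 - u)) '' Ioo 0 1 = Ioi 0 := by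
    ext t
    constructor
    · rintro ⟨u, hu, rfl⟩
      exact div_pos hu.1 (by linarith [hu.2])
    · intro ht
      have ht0 : (0:ℝ) < t := ht
      have h1t : (0:ℝ) < 1 + t := by linarith
      refine ⟨t / (1 + t), ⟨div_pos ht0 h1t, ?_⟩, ?_⟩
      · rw [div_lt_one h1t]; linarith
      · show t / (1+t) / (1 - t / (1+t)) = t
        have hs : 1 - t/(1+t) = 1/(1+t) := by field_simp; ring
        rw [hs]
        field_simp
  have hderiv : ∀ u ∈ Ioo (0:ℝ) 1, HasDerivWithinAt (fun u : ℝ => u / (1 - u)) ((1-u)^(-2 : ℝ)) (Ioo 0 1) u := by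
    intro u hu
    have h1 : (1:ℝ) - u ≠ 0 := by linarith [hu.2]
    have := (hasDerivAt_id u).div ((hasDerivAt_id u).const_sub 1) h1
    refine this.hasDerivWithinAt.congr_deriv ?_
    simp only [id]
    rw [Real.rpow_neg (by linarith [hu.2]), Real.rpow_two]
    rw [show (1 * (1 - u) - u * -1 : ℝ) = 1 by ring, one_div]
  have hinj : InjOn (fun u : ℝ => u / (1 - u)) (Ioo 0 1) := by
    intro x hx y hy hxy
    have h1 : (1:ℝ) - x ≠ 0 := by linarith [hx.2]
    have h2 : (1:ℝ) - y ≠ 0 := by linarith [hy.2]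
    field_simp at hxy
    linarith [hxy]
  have := integral_image_eq_integral_abs_deriv_smul measurableSet_Ioo hderiv hinj
    (fun t => t ^ (a-1) * (1+t) ^ (-(a+b)))
  rw [himg] at this
  rw [this]
  refine setIntegral_congr_fun measurableSet_Ioo fun u hu => ?_
  have hu0 : (0:ℝ) < u := hu.1
  have hu1 : (0:ℝ) < 1 - u := by linarith [hu.2]
  rw [smul_eq_mul, abs_of_pos (Real.rpow_pos_of_pos hu1 _)]
  have hplus : 1 + u / (1 - u) = (1-u)⁻¹ := by field_simp; ring
  have key : ((1-u) ^ (-2:ℝ)) * ((1-u) ^ (-(a-1)) * (1-u) ^ (a+b)) = (1-u) ^ (b-1) := by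
    rw [← Real.rpow_add hu1, ← Real.rpow_add hu1,
      show (-2 + (-(a-1) + (a+b)) : ℝ) = b - 1 by ring]
  rw [hplus, div_rpow hu0.le hu1.le, Real.inv_rpow hu1.le, ← Real.rpow_neg hu1.le, neg_neg,
    div_eq_mul_inv, ← Real.rpow_neg hu1.le, ← key]
  ring

lemma ioo_beta {a b : ℝ} (ha : 0 < a) (hb : 0 < b) :
    ∫ u in Ioo (0:ℝ) 1, u ^ (a-1) * (1-u) ^ (b-1) = Gamma a * Gamma b / Gamma (a+b) := by
  rw [← MeasureTheory.integral_Ioc_eq_integral_Ioo, ← intervalIntegral.integral_of_le zero_le_one]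
  exact realBeta ha hb

lemma radial_lt {n : ℕ} (hn : 0 < n) {c s : ℝ} (hc : 0 < c) (hs : (n:ℝ)/2 < s) :
    ∫ r in Ioi (0:ℝ), r ^ ((n:ℝ)-1) * (1 + c*r^2) ^ (-s)
      = (1/2) * c ^ (-(n:ℝ)/2) * (Gamma ((n:ℝ)/2) * Gamma (s - (n:ℝ)/2) / Gamma s) := by
  have hn2 : (0:ℝ) < (n:ℝ)/2 := by positivity
  have h2 := subst_sq hc ((n:ℝ)-1) (fun t => (1+t)^(-s))
  have e1 : (-(((n:ℝ)-1)+1)/2) = -((n:ℝ)/2) := by ring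
  have e2 : ((((n:ℝ)-1)-1)/2) = (n:ℝ)/2 - 1 := by ring
  rw [e1, e2] at h2
  rw [← h2]
  simp_rw [mul_assoc]
  rw [MeasureTheory.integral_const_mul, MeasureTheory.integral_const_mul]
  simp_rw [← mul_assoc]
  have e3 : ∀ t : ℝ, (1+t) ^ (-s) = (1+t) ^ (-((n:ℝ)/2 + (s - (n:ℝ)/2))) := by
    intro t; congr 1; ring
  simp_rw [e3]
  rw [subst_mobius ((n:ℝ)/2) (s - (n:ℝ)/2), ioo_beta hn2 (by linarith)]
  rw [show (n:ℝ)/2 + (s - (n:ℝ)/2) = s by ring]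
  ring

lemma radial_gt {n : ℕ} (hn : 0 < n) {c q : ℝ} (hc : 0 < c) (hq : 0 < q) :
    ∫ r in Ioi (0:ℝ), r ^ ((n:ℝ)-1) * max (1 - c*r^2) 0 ^ q
      = (1/2) * c ^ (-(n:ℝ)/2) * (Gamma ((n:ℝ)/2) * Gamma (q+1) / Gamma ((n:ℝ)/2 + (q+1))) := by
  have hn2 : (0:ℝ) < (n:ℝ)/2 := by positivity
  have h2 := subst_sq hc ((n:ℝ)-1) (fun t => max (1-t) 0 ^ q)
  have e1 : (-(((n:ℝ)-1)+1)/2) = -((n:ℝ)/2) := by ring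
  have e2 : ((((n:ℝ)-1)-1)/2) = (n:ℝ)/2 - 1 := by ring
  rw [e1, e2] at h2
  rw [← h2]
  simp_rw [mul_assoc]
  rw [MeasureTheory.integral_const_mul, MeasureTheory.integral_const_mul]
  have hsub : ∫ t in Ioi (0:ℝ), t ^ ((n:ℝ)/2-1) * max (1-t) 0 ^ q
      = ∫ t in Ioo (0:ℝ) 1, t ^ ((n:ℝ)/2-1) * max (1-t) 0 ^ q := by
    refine setIntegral_eq_of_subset_of_forall_diff_eq_zero measurableSet_Ioi
      (fun t ht => ht.1) (fun t ht => ?_)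
    have h1 : (1:ℝ) ≤ t := by
      rcases ht with ⟨ht1, ht2⟩
      by_contra h
      exact ht2 ⟨ht1, lt_of_not_ge h⟩
    rw [max_eq_right (by linarith), Real.zero_rpow hq.ne', mul_zero]
  rw [hsub]
  have : ∫ t in Ioo (0:ℝ) 1, t ^ ((n:ℝ)/2-1) * max (1-t) 0 ^ q
      = ∫ t in Ioo (0:ℝ) 1, t ^ ((n:ℝ)/2-1) * (1-t) ^ ((q+1)-1) := by
    refine setIntegral_congr_fun measurableSet_Ioo fun t ht => ?_
    rw [max_eq_left (by linarith [ht.2]), show q+1-1 = q by ring]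
  rw [this, ioo_beta hn2 (by linarith)]
  ring

lemma lin_change {n : ℕ} (M : Matrix (Fin n) (Fin n) ℝ) (hM : M.det ≠ 0)
    (F : (Fin n → ℝ) → ℝ) (hF : Continuous F) :
    ∫ x : Fin n → ℝ, F x = |M.det| * ∫ y : Fin n → ℝ, F (M.mulVec y) := by
  have hdet : LinearMap.det (Matrix.toLin' M) ≠ 0 := by rwa [LinearMap.det_toLin']
  have hcont : Continuous (Matrix.toLin' M) := LinearMap.continuous_of_finiteDimensional _
  have h1 : ∫ x : Fin n → ℝ, F (Matrix.toLin' M x) ∂volume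
      = ∫ y : Fin n → ℝ, F y ∂(Measure.map (Matrix.toLin' M) volume) :=
    (integral_map hcont.aemeasurable hF.aestronglyMeasurable).symm
  rw [Real.map_linearMap_volume_pi_eq_smul_volume_pi hdet, LinearMap.det_toLin',
    MeasureTheory.integral_smul_measure, ENNReal.toReal_ofReal (abs_nonneg _), abs_inv, smul_eq_mul] at h1
  have h2 : ∀ x, Matrix.toLin' M x = M.mulVec x := fun x => Matrix.toLin'_apply M x
  simp_rw [h2] at h1
  rw [h1]
  rw [← mul_assoc, mul_inv_cancel₀ (abs_ne_zero.2 hM), one_mul]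

open scoped MatrixOrder in
lemma sqrt_factor {n : ℕ} (C : Matrix (Fin n) (Fin n) ℝ) (hC : C.PosDef) :
    ∃ M : Matrix (Fin n) (Fin n) ℝ, M.det ≠ 0 ∧ |M.det| = C.det ^ ((1:ℝ)/2) ∧
      ∀ y : Fin n → ℝ, (M.mulVec y) ⬝ᵥ C⁻¹.mulVec (M.mulVec y) = y ⬝ᵥ y := by
  have hsd := hC.posSemidef
  set M := CFC.sqrt C with hMdef
  have hMM : M * M = C := CFC.sqrt_mul_sqrt_self C hsd.nonneg
  have hdet2 : M.det * M.det = C.det := by rw [← Matrix.det_mul, hMM]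
  have hCdet : 0 < C.det := hC.det_pos
  have hMdetne : M.det ≠ 0 := by
    intro h; rw [h, mul_zero] at hdet2; linarith
  have hdet_eq : |M.det| = C.det ^ ((1:ℝ)/2) := by
    rw [← Real.sqrt_eq_rpow, ← hdet2, Real.sqrt_mul_self_eq_abs]
  refine ⟨M, hMdetne, hdet_eq, fun y => ?_⟩
  have hHerm : Mᴴ = M := (CFC.sqrt_nonneg C).posSemidef.1
  have hinv : M * (C⁻¹ * M) = 1 := by
    rw [← hMM, Matrix.mul_inv_rev]
    simp only [Matrix.mul_assoc]
    rw [Matrix.nonsing_inv_mul M (isUnit_iff_ne_zero.2 hMdetne), Matrix.mul_one, Matrix.mul_nonsing_inv M (isUnit_iff_ne_zero.2 hMdetne)]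
  have hsymm : Mᵀ = M := by
    nth_rewrite 2 [← hHerm]
    ext i j
    simp [Matrix.conjTranspose_apply]
  have hvec : M.mulVec y = Matrix.vecMul y M := by
    nth_rewrite 1 [← hsymm]
    rw [Matrix.mulVec_transpose]
  calc (M.mulVec y) ⬝ᵥ C⁻¹.mulVec (M.mulVec y)
      = Matrix.vecMul y M ⬝ᵥ (C⁻¹ * M).mulVec y := by rw [← hvec, Matrix.mulVec_mulVec]
    _ = y ⬝ᵥ M.mulVec ((C⁻¹ * M).mulVec y) := by rw [← Matrix.dotProduct_mulVec]
    _ = y ⬝ᵥ y := by rw [Matrix.mulVec_mulVec, hinv, Matrix.one_mulVec]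

lemma polar_step {n : ℕ} (hn : 0 < n) (G : ℝ → ℝ) :
    ∫ y : Fin n → ℝ, G (y ⬝ᵥ y)
      = (n : ℝ) * (Real.sqrt π ^ n / Gamma ((n:ℝ)/2 + 1)) * ∫ r in Ioi (0:ℝ), r ^ ((n:ℝ)-1) * G (r^2) := by
  haveI : Nonempty (Fin n) := ⟨⟨0, hn⟩⟩
  haveI : Nontrivial (EuclideanSpace ℝ (Fin n)) := by
    refine ⟨EuclideanSpace.single ⟨0, hn⟩ 1, 0, ?_⟩
    intro h
    have := congrArg (fun f : EuclideanSpace ℝ (Fin n) => f ⟨0, hn⟩) h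
    simp [EuclideanSpace.single_apply] at this
  have htrans := (EuclideanSpace.volume_preserving_symm_measurableEquiv_toLp (Fin n)).integral_comp
    (MeasurableEquiv.measurableEmbedding _) (fun y => G (y ⬝ᵥ y))
  rw [← htrans]
  have hx : ∀ x : EuclideanSpace ℝ (Fin n),
      ((MeasurableEquiv.toLp 2 (Fin n → ℝ)).symm x) ⬝ᵥ ((MeasurableEquiv.toLp 2 (Fin n → ℝ)).symm x)
        = ‖x‖^2 := by
    intro x
    rw [EuclideanSpace.norm_eq, Real.sq_sqrt (by positivity)]
    simp [dotProduct, Real.norm_eq_abs, sq_abs, sq]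
  simp_rw [hx]
  have hpolar := integral_fun_norm_addHaar (volume : Measure (EuclideanSpace ℝ (Fin n)))
    (fun r => G (r^2))
  have hrank : Module.finrank ℝ (EuclideanSpace ℝ (Fin n)) = n := finrank_euclideanSpace_fin
  rw [hrank] at hpolar
  rw [hpolar]
  have hball : (volume.real (Metric.ball (0 : EuclideanSpace ℝ (Fin n)) 1) : ℝ)
      = Real.sqrt π ^ n / Gamma ((n:ℝ)/2 + 1) := by
    rw [measureReal_def, EuclideanSpace.volume_ball, Fintype.card_fin, ENNReal.ofReal_one, one_pow, one_mul,
      ENNReal.toReal_ofReal (by positivity)]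
  rw [hball]
  rw [nsmul_eq_mul, smul_eq_mul, ← mul_assoc]
  congr 1
  refine setIntegral_congr_fun measurableSet_Ioi fun r hr => ?_
  have hr0 : (0:ℝ) < r := hr
  rw [smul_eq_mul, ← Real.rpow_natCast r (n-1), Nat.cast_sub hn, Nat.cast_one]

set_option maxHeartbeats 2000000 in
/-- g_{p,C} is a probability density on ℝⁿ: nonnegative and integrating to 1. -/
theorem stmt_18 (n : ℕ) (hn : 0 < n) (p : ℝ)
    (hp : (n : ℝ) / (n + 2) < p) (hp1 : p ≠ 1)
    (C : Matrix (Fin n) (Fin n) ℝ) (hC : C.PosDef) :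
    (∀ x, 0 ≤ gpc n p C x) ∧ (∫ x : Fin n → ℝ, gpc n p C x) = 1 := by
  have hn2 : (0:ℝ) < (n:ℝ)/2 := by positivity
  have hnn : (0:ℝ) < n := by exact_mod_cast hn
  have hb2 : 0 < 2*p - (n:ℝ)*(1-p) := by
    rw [div_lt_iff₀ (by positivity)] at hp
    nlinarith
  have hβ : 0 < 1 / (2*p - (n:ℝ)*(1-p)) := by positivity
  have hdetC : 0 < C.det := hC.det_pos
  have hD : (0:ℝ) < C.det ^ ((1:ℝ)/2) := Real.rpow_pos_of_pos hdetC _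
  have hB : (0:ℝ) < π ^ ((n:ℝ)/2) := Real.rpow_pos_of_pos pi_pos _
  have hπeq : Real.sqrt π ^ n = π ^ ((n:ℝ)/2) := by
    rw [Real.sqrt_eq_rpow, ← Real.rpow_natCast (π ^ ((1:ℝ)/2)) n, ← Real.rpow_mul pi_pos.le]
    congr 1; ring
  have hG1 : 0 < Gamma ((n:ℝ)/2) := Real.Gamma_pos_of_pos hn2
  have hΓhalf : Gamma ((n:ℝ)/2 + 1) = ((n:ℝ)/2) * Gamma ((n:ℝ)/2) := Real.Gamma_add_one hn2.ne'
  have hQ0 : ∀ x : Fin n → ℝ, 0 ≤ x ⬝ᵥ C⁻¹.mulVec x := by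
    intro x
    have := (Matrix.posDef_inv_iff.2 hC).posSemidef.dotProduct_mulVec_nonneg x
    simpa using this
  obtain ⟨M, hMne, hMdet, hMquad⟩ := sqrt_factor C hC
  rcases lt_or_gt_of_ne hp1 with hlt | hgt
  · -- p < 1
    have h1p : 0 < 1 - p := by linarith
    set s : ℝ := 1/(1-p) with hs_def
    have hs_pos : 0 < s := by positivity
    have hκ : 0 < (1-p) * (1 / (2*p - (n:ℝ)*(1-p))) := mul_pos h1p hβ
    set κ : ℝ := (1-p) * (1 / (2*p - (n:ℝ)*(1-p))) with hκ_def
    have hsn : (n:ℝ)/2 < s := by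
      rw [hs_def, lt_div_iff₀ h1p]
      nlinarith
    have hG2 : 0 < Gamma (s - (n:ℝ)/2) := Real.Gamma_pos_of_pos (by linarith)
    have hGs : 0 < Gamma s := Real.Gamma_pos_of_pos hs_pos
    have hApval : Ap n p C = Gamma s * κ ^ ((n:ℝ)/2) /
        (Gamma (s - (n:ℝ)/2) * π ^ ((n:ℝ)/2) * C.det ^ ((1:ℝ)/2)) := by
      rw [Ap, if_pos hlt, hκ_def, hs_def, mul_comm (1 / (2*p - (n:ℝ)*(1-p))) (1-p)]
    have hAp : 0 < Ap n p C := by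
      rw [hApval]
      exact div_pos (mul_pos hGs (Real.rpow_pos_of_pos hκ _))
        (mul_pos (mul_pos hG2 hB) hD)
    have he : (1:ℝ)/(p-1) = -s := by
      rw [hs_def, show p - 1 = -(1-p) by ring, ← one_div_neg_eq_neg_one_div]
    refine ⟨fun x => mul_nonneg hAp.le (Real.rpow_nonneg (le_max_right _ 0) _), ?_⟩
    have hFcont : Continuous fun x : Fin n → ℝ =>
        max (1 + κ * (x ⬝ᵥ C⁻¹.mulVec x)) 0 ^ ((1:ℝ)/(p-1)) := by
      refine Continuous.rpow_const ?_ ?_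
      · exact (continuous_const.add (continuous_const.mul
          (continuous_id.dotProduct (continuous_const.matrix_mulVec continuous_id)))).max
          continuous_const
      · intro x
        left
        have h1 : (1:ℝ) ≤ 1 + κ * (x ⬝ᵥ C⁻¹.mulVec x) := by
          nlinarith [hQ0 x, hκ]
        have := le_max_left (1 + κ * (x ⬝ᵥ C⁻¹.mulVec x)) (0:ℝ)
        positivity
    simp only [gpc, ← hκ_def]
    rw [MeasureTheory.integral_const_mul]
    rw [lin_change M hMne _ hFcont]
    simp_rw [hMquad]
    rw [polar_step hn (fun t => max (1 + κ * t) 0 ^ ((1:ℝ)/(p-1)))]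
    have hrad : ∫ r in Ioi (0:ℝ), r ^ ((n:ℝ)-1) * max (1 + κ * r^2) 0 ^ ((1:ℝ)/(p-1))
        = (1/2) * κ ^ (-(n:ℝ)/2) * (Gamma ((n:ℝ)/2) * Gamma (s - (n:ℝ)/2) / Gamma s) := by
      rw [← radial_lt hn hκ hsn]
      refine setIntegral_congr_fun measurableSet_Ioi fun r hr => ?_
      have hpos : (0:ℝ) < 1 + κ * r^2 := by nlinarith [sq_nonneg r, hκ]
      rw [max_eq_left hpos.le, he]
    rw [hrad, hApval, hMdet, hπeq, hΓhalf]
    have hAA : κ ^ ((n:ℝ)/2) * κ ^ (-(n:ℝ)/2) = 1 := by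
      rw [← Real.rpow_add hκ, show ((n:ℝ)/2 + -(n:ℝ)/2 : ℝ) = 0 by ring, Real.rpow_zero]
    have hKA : 0 < κ ^ ((n:ℝ)/2) := Real.rpow_pos_of_pos hκ _
    have hKB : 0 < κ ^ (-(n:ℝ)/2) := Real.rpow_pos_of_pos hκ _
    generalize hA1 : κ ^ ((n:ℝ)/2) = KA at hAA hKA ⊢
    generalize hA2 : κ ^ (-(n:ℝ)/2) = KB at hAA hKB ⊢
    generalize hB1 : π ^ ((n:ℝ)/2) = PB at hB ⊢
    generalize hD1 : C.det ^ ((1:ℝ)/2) = DD at hD ⊢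
    generalize hg1 : Gamma ((n:ℝ)/2) = G1 at hG1 ⊢
    generalize hg2 : Gamma (s - (n:ℝ)/2) = G2 at hG2 ⊢
    generalize hg3 : Gamma s = G3 at hGs ⊢
    generalize hn1 : (n:ℝ) = nn at hnn ⊢
    clear_value κ s
    clear * - hAA hKA hKB hB hD hG1 hG2 hGs hnn
    field_simp
    linear_combination hAA
  · -- p > 1
    have hp1' : 0 < p - 1 := by linarith
    set q : ℝ := 1/(p-1) with hq_def
    have hq_pos : 0 < q := by positivity
    have ha : 0 < (p-1) * (1 / (2*p - (n:ℝ)*(1-p))) := mul_pos hp1' hβ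
    set a : ℝ := (p-1) * (1 / (2*p - (n:ℝ)*(1-p))) with ha_def
    have hG2 : 0 < Gamma (q+1) := Real.Gamma_pos_of_pos (by linarith)
    have hG3 : 0 < Gamma ((n:ℝ)/2 + (q+1)) := Real.Gamma_pos_of_pos (by linarith)
    have hpq : p / (p-1) = q + 1 := by
      rw [hq_def]; field_simp; ring
    have hApval : Ap n p C = Gamma ((n:ℝ)/2 + (q+1)) * a ^ ((n:ℝ)/2) /
        (Gamma (q+1) * π ^ ((n:ℝ)/2) * C.det ^ ((1:ℝ)/2)) := by
      rw [Ap, if_neg (not_lt.2 hgt.le), ha_def, hpq,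
        mul_comm (1 / (2*p - (n:ℝ)*(1-p))) (p-1), add_comm ((q:ℝ)+1) ((n:ℝ)/2)]
    have hAp : 0 < Ap n p C := by
      rw [hApval]
      exact div_pos (mul_pos hG3 (Real.rpow_pos_of_pos ha _))
        (mul_pos (mul_pos hG2 hB) hD)
    refine ⟨fun x => mul_nonneg hAp.le (Real.rpow_nonneg (le_max_right _ 0) _), ?_⟩
    have hFcont : Continuous fun x : Fin n → ℝ =>
        max (1 + (1-p) * (1 / (2*p - (n:ℝ)*(1-p))) * (x ⬝ᵥ C⁻¹.mulVec x)) 0 ^ ((1:ℝ)/(p-1)) := by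
      refine Continuous.rpow_const ?_ fun x => Or.inr hq_pos.le
      exact (continuous_const.add (continuous_const.mul
        (continuous_id.dotProduct (continuous_const.matrix_mulVec continuous_id)))).max
        continuous_const
    simp only [gpc]
    rw [MeasureTheory.integral_const_mul]
    rw [lin_change M hMne _ hFcont]
    simp_rw [hMquad]
    rw [polar_step hn (fun t => max (1 + (1-p) * (1 / (2*p - (n:ℝ)*(1-p))) * t) 0 ^ ((1:ℝ)/(p-1)))]
    have hrad : ∫ r in Ioi (0:ℝ), r ^ ((n:ℝ)-1)
          * max (1 + (1-p) * (1 / (2*p - (n:ℝ)*(1-p))) * r^2) 0 ^ ((1:ℝ)/(p-1))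
        = (1/2) * a ^ (-(n:ℝ)/2) * (Gamma ((n:ℝ)/2) * Gamma (q+1) / Gamma ((n:ℝ)/2 + (q+1))) := by
      rw [← radial_gt hn ha hq_pos]
      refine setIntegral_congr_fun measurableSet_Ioi fun r hr => ?_
      rw [hq_def, ha_def]
      congr 2
      ring
    rw [hrad, hApval, hMdet, hπeq, hΓhalf]
    have hAA : a ^ ((n:ℝ)/2) * a ^ (-(n:ℝ)/2) = 1 := by
      rw [← Real.rpow_add ha, show ((n:ℝ)/2 + -(n:ℝ)/2 : ℝ) = 0 by ring, Real.rpow_zero]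
    have hKA : 0 < a ^ ((n:ℝ)/2) := Real.rpow_pos_of_pos ha _
    have hKB : 0 < a ^ (-(n:ℝ)/2) := Real.rpow_pos_of_pos ha _
    generalize hA1 : a ^ ((n:ℝ)/2) = KA at hAA hKA ⊢
    generalize hA2 : a ^ (-(n:ℝ)/2) = KB at hAA hKB ⊢
    generalize hB1 : π ^ ((n:ℝ)/2) = PB at hB ⊢
    generalize hD1 : C.det ^ ((1:ℝ)/2) = DD at hD ⊢
    generalize hg1 : Gamma ((n:ℝ)/2) = G1 at hG1 ⊢
    generalize hg2 : Gamma (q+1) = G2 at hG2 ⊢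
    generalize hg3 : Gamma ((n:ℝ)/2 + (q+1)) = G3 at hG3 ⊢
    generalize hn1 : (n:ℝ) = nn at hnn ⊢
    clear_value a q
    clear * - hAA hKA hKB hB hD hG1 hG2 hG3 hnn
    field_simp
    linear_combination hAA
end
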